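/- Let k ≥ 2 be an integer, let t_1,…,t_k be reals with 0 ≤ t_1 ≤ t_2 ≤ ⋯ ≤ t_{k−1} ≤ t_k and t_k > 0, and let C_k > 0. For each i = 1,…,k−1 let α_i > 0, β_i > 0, U_i > 0, and C_i ≥ 0 be reals, and assume Σ_{i=1}^{k−1} α_i·U_i ≤ 1 and Σ_{i=1}^{k−1} β_i·C_i ≤ t_k. If C_k/t_k ≤ 1 − Σ_{i=1}^{k−1} α_i·U_i − (Σ_{i=1}^{k−1} ( β_i·C_i − α_i·U_i·(Σ_{ℓ=i}^{k−1} β_ℓ·C_ℓ) ))/t_k, then there exists an index j ∈ {1,…,k} such that C_k + Σ_{i=1}^{k−1} α_i·t_i·U_i + Σ_{i=1}^{j−1} β_i·C_i ≤ t_j. -/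

import Mathlib

/-- k²Q framework, general schedulability lemma (Lemma 5). -/
theorem k2q_general_schedulability (k : ℕ) (hk : 2 ≤ k)
    (t : ℕ → ℝ) (ht1 : 0 ≤ t 1) (htk : 0 < t k)
    (htmono : ∀ i j : ℕ, 1 ≤ i → i ≤ j → j ≤ k → t i ≤ t j)
    (Ck : ℝ) (hCk : 0 < Ck)
    (α β U C : ℕ → ℝ)
    (hα : ∀ i ∈ Finset.Icc 1 (k - 1), 0 < α i)
    (hβ : ∀ i ∈ Finset.Icc 1 (k - 1), 0 < β i)
    (hU : ∀ i ∈ Finset.Icc 1 (k - 1), 0 < U i)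
    (hC : ∀ i ∈ Finset.Icc 1 (k - 1), 0 ≤ C i)
    (hsumαU : ∑ i ∈ Finset.Icc 1 (k - 1), α i * U i ≤ 1)
    (hsumβC : ∑ i ∈ Finset.Icc 1 (k - 1), β i * C i ≤ t k)
    (hcond : Ck / t k ≤ 1 - (∑ i ∈ Finset.Icc 1 (k - 1), α i * U i)
      - (∑ i ∈ Finset.Icc 1 (k - 1),
          (β i * C i - α i * U i * ∑ ℓ ∈ Finset.Icc i (k - 1), β ℓ * C ℓ)) / t k) :
    ∃ j ∈ Finset.Icc 1 k,
      Ck + (∑ i ∈ Finset.Icc 1 (k - 1), α i * t i * U i)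
        + (∑ i ∈ Finset.Icc 1 (j - 1), β i * C i) ≤ t j := by
  by_contra hcon
  push_neg at hcon
  set W : ℝ := ∑ i ∈ Finset.Icc 1 (k-1), α i * U i with hWdef
  set B : ℝ := ∑ i ∈ Finset.Icc 1 (k-1), β i * C i with hBdef
  set S : ℝ := ∑ i ∈ Finset.Icc 1 (k-1), α i * t i * U i with hSdef
  set T : ℝ := ∑ i ∈ Finset.Icc 1 (k-1),
      (α i * U i) * ∑ ℓ ∈ Finset.Icc i (k-1), β ℓ * C ℓ with hTdef
  set P : ℝ := ∑ i ∈ Finset.Icc 1 (k-1),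
      (α i * U i) * ∑ ℓ ∈ Finset.Icc 1 (i-1), β ℓ * C ℓ with hPdef
  have hne : (Finset.Icc 1 (k-1)).Nonempty := Finset.nonempty_Icc.mpr (by omega)
  -- per-index splitting of B
  have hsplit : ∀ i ∈ Finset.Icc 1 (k-1),
      (∑ ℓ ∈ Finset.Icc 1 (i-1), β ℓ * C ℓ)
        + (∑ ℓ ∈ Finset.Icc i (k-1), β ℓ * C ℓ) = B := by
    intro i hi
    simp only [Finset.mem_Icc] at hi
    have e1 : Finset.Icc 1 (i-1) = Finset.Ioc 0 (i-1) := by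
      exact (Finset.Icc_add_one_left_eq_Ioc 0 (i-1))
    have e2 : Finset.Icc i (k-1) = Finset.Ioc (i-1) (k-1) := by
      rw [← Finset.Icc_add_one_left_eq_Ioc]
      congr 1
      omega
    have e3 : Finset.Icc 1 (k-1) = Finset.Ioc 0 (k-1) := by
      exact (Finset.Icc_add_one_left_eq_Ioc 0 (k-1))
    rw [e1, e2, hBdef, e3]
    exact Finset.sum_Ioc_consecutive _ (by omega) (by omega)
  have hTP : T + P = W * B := by
    rw [hTdef, hPdef, ← Finset.sum_add_distrib, hWdef, Finset.sum_mul]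
    apply Finset.sum_congr rfl
    intro i hi
    rw [← mul_add, add_comm (∑ ℓ ∈ Finset.Icc i (k-1), β ℓ * C ℓ), hsplit i hi]
  -- negated inequality at j = k
  have htk' : t k < Ck + S + B := by
    have := hcon k (Finset.mem_Icc.mpr ⟨by omega, le_refl k⟩)
    exact this
  -- weighted sum of negated inequalities at j = 1..k-1
  have hS : S < W * (Ck + S) + P := by
    have hlt : S < ∑ i ∈ Finset.Icc 1 (k-1),
        (α i * U i) * ((Ck + S) + ∑ ℓ ∈ Finset.Icc 1 (i-1), β ℓ * C ℓ) := by
      rw [hSdef]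
      apply Finset.sum_lt_sum_of_nonempty hne
      intro i hi
      have hαi := hα i hi
      have hUi := hU i hi
      have hmem : i ∈ Finset.Icc 1 k := by
        simp only [Finset.mem_Icc] at hi ⊢; omega
      have hti := hcon i hmem
      have := mul_lt_mul_of_pos_left hti (mul_pos hαi hUi)
      nlinarith [this]
    calc S < ∑ i ∈ Finset.Icc 1 (k-1),
        (α i * U i) * ((Ck + S) + ∑ ℓ ∈ Finset.Icc 1 (i-1), β ℓ * C ℓ) := hlt
      _ = W * (Ck + S) + P := by
          simp only [hWdef, hPdef, mul_add, Finset.sum_add_distrib, ← Finset.sum_mul]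
  -- the condition multiplied by t k
  have hDk : Ck ≤ (1 - W) * t k - (B - T) := by
    have hD : (∑ i ∈ Finset.Icc 1 (k - 1),
        (β i * C i - α i * U i * ∑ ℓ ∈ Finset.Icc i (k - 1), β ℓ * C ℓ)) = B - T := by
      rw [Finset.sum_sub_distrib, hBdef, hTdef]
    rw [hD] at hcond
    have h := mul_le_mul_of_nonneg_right hcond htk.le
    rw [div_mul_cancel₀ _ (ne_of_gt htk)] at h
    have h2 : (1 - W - (B - T) / t k) * t k = (1 - W) * t k - (B - T) := by
      field_simp
    rw [h2] at h
    exact h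
  -- combine
  have hW1 : (0:ℝ) ≤ 1 - W := by linarith
  nlinarith [mul_le_mul_of_nonneg_left htk'.le hW1, hTP, hS, hDk]
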